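/- Let M(n,t,s) be the set of monotone DNF formulas with exactly t distinct terms, each containing exactly s distinct variables out of n. Let z ∈ {0,1}^n with t ≤ C(n,s) − C(|z|,s). If φ is drawn uniformly at random from M(n,t,s), then Pr[φ(z)=0] ≤ (1 − ((|z|−s)/n)^s)^t. -/

import Mathlib

/-- Hamming weight of an assignment. -/
def wt {n : ℕ} (z : Fin n → Bool) : ℕ :=
  (Finset.univ.filter (fun i => z i = true)).card

lemma lem1 (t : ℕ) {a b : ℕ} (hab : a ≤ b) :
    Nat.descFactorial a t * b ^ t ≤ Nat.descFactorial b t * a ^ t := by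
  induction t with
  | zero => simp
  | succ k ih =>
    rw [Nat.descFactorial_succ, Nat.descFactorial_succ, pow_succ, pow_succ]
    have h1 : (a - k) * b ≤ (b - k) * a := by
      have h2 : k * a ≤ k * b := Nat.mul_le_mul_left k hab
      have h3 : a * b = b * a := Nat.mul_comm a b
      rw [Nat.sub_mul, Nat.sub_mul]
      omega
    calc (a - k) * Nat.descFactorial a k * (b ^ k * b)
        = ((a - k) * b) * (Nat.descFactorial a k * b ^ k) := by ring
      _ ≤ ((b - k) * a) * (Nat.descFactorial b k * a ^ k) := Nat.mul_le_mul h1 ih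
      _ = (b - k) * Nat.descFactorial b k * (a ^ k * a) := by ring

lemma lem1c (t : ℕ) {a b : ℕ} (hab : a ≤ b) :
    Nat.choose a t * b ^ t ≤ Nat.choose b t * a ^ t := by
  have h := lem1 t hab
  rw [Nat.descFactorial_eq_factorial_mul_choose, Nat.descFactorial_eq_factorial_mul_choose] at h
  have ht : 0 < t.factorial := Nat.factorial_pos t
  apply Nat.le_of_mul_le_mul_left _ ht
  calc t.factorial * (Nat.choose a t * b ^ t) = t.factorial * Nat.choose a t * b ^ t := by ring
    _ ≤ t.factorial * Nat.choose b t * a ^ t := h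
    _ = t.factorial * (Nat.choose b t * a ^ t) := by ring

lemma lem2 {s w n : ℕ} (hsw : s ≤ w) (hwn : w ≤ n) : ∀ k ≤ s,
    (w - s) ^ k * Nat.descFactorial n k ≤ Nat.descFactorial w k * n ^ k := by
  intro k
  induction k with
  | zero => simp
  | succ m ih =>
    intro hk
    have hm : m ≤ s := Nat.le_of_succ_le hk
    rw [Nat.descFactorial_succ, Nat.descFactorial_succ, pow_succ, pow_succ]
    have h1 : (w - s) * (n - m) ≤ (w - m) * n :=
      Nat.mul_le_mul (Nat.sub_le_sub_left hm w) (Nat.sub_le n m)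
    calc (w - s) ^ m * (w - s) * ((n - m) * Nat.descFactorial n m)
        = ((w - s) * (n - m)) * ((w - s) ^ m * Nat.descFactorial n m) := by ring
      _ ≤ ((w - m) * n) * (Nat.descFactorial w m * n ^ m) := Nat.mul_le_mul h1 (ih hm)
      _ = (w - m) * Nat.descFactorial w m * (n ^ m * n) := by ring

lemma lem2c {s w n : ℕ} (hsw : s ≤ w) (hwn : w ≤ n) :
    (w - s) ^ s * Nat.choose n s ≤ Nat.choose w s * n ^ s := by
  have h := lem2 hsw hwn s le_rfl
  rw [Nat.descFactorial_eq_factorial_mul_choose, Nat.descFactorial_eq_factorial_mul_choose] at h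
  have hf : 0 < s.factorial := Nat.factorial_pos s
  apply Nat.le_of_mul_le_mul_left _ hf
  calc s.factorial * ((w - s) ^ s * Nat.choose n s)
      = (w - s) ^ s * (s.factorial * Nat.choose n s) := by ring
    _ ≤ s.factorial * Nat.choose w s * n ^ s := h
    _ = s.factorial * (Nat.choose w s * n ^ s) := by ring

theorem stmt10 {n t s : ℕ} (z : Fin n → Bool) (hs : s ≤ wt z)
    (ht : t ≤ Nat.choose n s - Nat.choose (wt z) s) :
    ((((Finset.powersetCard s (Finset.univ : Finset (Fin n))).powersetCard t).filter
        (fun φ => ∀ T ∈ φ, ∃ i ∈ T, z i = false)).card : ℝ) /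
      ((((Finset.powersetCard s (Finset.univ : Finset (Fin n))).powersetCard t)).card : ℝ) ≤
    (1 - (((wt z : ℝ) - (s : ℝ)) / (n : ℝ)) ^ s) ^ t := by
  classical
  set w := wt z with hw
  have hwn : w ≤ n := by
    have := Finset.card_filter_le (Finset.univ : Finset (Fin n)) (fun i => z i = true)
    simpa [hw, wt] using this
  set S : Finset (Fin n) := Finset.univ.filter (fun i => z i = true) with hS
  have hScard : S.card = w := rfl
  set A : Finset (Finset (Fin n)) := Finset.powersetCard s Finset.univ with hAdef
  -- set identification
  have hA : (A.powersetCard t).filter (fun φ => ∀ T ∈ φ, ∃ i ∈ T, z i = false)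
      = Finset.powersetCard t (A.filter (fun T => ∃ i ∈ T, z i = false)) := by
    ext φ
    simp only [Finset.mem_filter, Finset.mem_powersetCard]
    constructor
    · rintro ⟨⟨hsub, hc⟩, hall⟩
      exact ⟨fun T hT => Finset.mem_filter.mpr ⟨hsub hT, hall T hT⟩, hc⟩
    · rintro ⟨hsub, hc⟩
      exact ⟨⟨fun T hT => (Finset.mem_filter.mp (hsub hT)).1, hc⟩,
        fun T hT => (Finset.mem_filter.mp (hsub hT)).2⟩
  have hAcard : A.card = Nat.choose n s := by
    simp [hAdef, Finset.card_powersetCard]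
  have hB : (A.filter (fun T => ∃ i ∈ T, z i = false)).card
      = Nat.choose n s - Nat.choose w s := by
    have e1 : A.filter (fun T => ¬ ∃ i ∈ T, z i = false) = Finset.powersetCard s S := by
      ext T
      simp only [hAdef, Finset.mem_filter, Finset.mem_powersetCard, Finset.subset_univ,
        true_and, not_exists, not_and, Bool.not_eq_false]
      constructor
      · rintro ⟨hc, hall⟩
        exact ⟨fun i hi => Finset.mem_filter.mpr ⟨Finset.mem_univ i, hall i hi⟩, hc⟩
      · rintro ⟨hsub, hc⟩
        exact ⟨hc, fun i hi => (Finset.mem_filter.mp (hsub hi)).2⟩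
    have e2 := Finset.card_filter_add_card_filter_not
      (s := A) (p := fun T => ∃ i ∈ T, z i = false)
    rw [e1] at e2
    have e3 : (Finset.powersetCard s S).card = Nat.choose w s := by
      rw [Finset.card_powersetCard, hScard]
    omega
  rw [hA, Finset.card_powersetCard, hB, Finset.card_powersetCard, hAcard]
  set N := Nat.choose n s with hN
  set G := Nat.choose w s with hG
  have hsn : s ≤ n := le_trans hs hwn
  have hNpos : 0 < N := Nat.choose_pos hsn
  have hGN : G ≤ N := Nat.choose_le_choose s hwn
  have htN : t ≤ N - G := ht
  have hCpos : 0 < Nat.choose N t := Nat.choose_pos (le_trans htN (Nat.sub_le N G))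
  have hNR : (0:ℝ) < (N:ℝ) := by exact_mod_cast hNpos
  have hnspos : (0:ℝ) < ((n:ℝ)) ^ s ∨ (n = 0 ∧ s = 0) := by
    rcases Nat.eq_zero_or_pos n with h | h
    · right
      exact ⟨h, by omega⟩
    · left
      positivity
  -- key real inequality: x ≤ G/N
  have hx : (((w : ℝ) - (s : ℝ)) / (n : ℝ)) ^ s ≤ (G:ℝ) / (N:ℝ) := by
    have hcast : ((w : ℝ) - (s : ℝ)) = ((w - s : ℕ) : ℝ) := by
      rw [Nat.cast_sub hs]
    rw [hcast, div_pow, ← Nat.cast_pow, ← Nat.cast_pow]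
    rcases hnspos with h | ⟨hn0, hs0⟩
    · have h' : (0:ℝ) < ((n ^ s : ℕ) : ℝ) := by push_cast; exact h
      rw [div_le_div_iff₀ h' hNR]
      exact_mod_cast lem2c hs hwn
    · subst hn0; subst hs0
      have hw0 : w = 0 := le_antisymm hwn (Nat.zero_le w)
      simp [hG, hN, hw0]
  have hbase : ((N - G : ℕ) : ℝ) / (N:ℝ) ≤ 1 - (((w : ℝ) - (s : ℝ)) / (n : ℝ)) ^ s := by
    rw [Nat.cast_sub hGN, sub_div, div_self (ne_of_gt hNR)]
    linarith
  have hbase0 : (0:ℝ) ≤ ((N - G : ℕ) : ℝ) / (N:ℝ) := by positivity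
  calc ((Nat.choose (N - G) t : ℝ)) / ((Nat.choose N t : ℝ))
      ≤ (((N - G : ℕ) : ℝ) / (N:ℝ)) ^ t := by
        rw [div_pow, div_le_div_iff₀ (by exact_mod_cast hCpos) (by positivity)]
        have := lem1c t (Nat.sub_le N G)
        calc ((Nat.choose (N - G) t : ℝ)) * (N:ℝ) ^ t
            = ((Nat.choose (N - G) t * N ^ t : ℕ) : ℝ) := by push_cast; ring
          _ ≤ ((Nat.choose N t * (N - G) ^ t : ℕ) : ℝ) := by exact_mod_cast this
          _ = ((N - G : ℕ):ℝ) ^ t * ((Nat.choose N t : ℝ)) := by push_cast; ring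
    _ ≤ (1 - (((w : ℝ) - (s : ℝ)) / (n : ℝ)) ^ s) ^ t := by
        exact pow_le_pow_left₀ hbase0 hbase t
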